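/- arXiv:1412.8733 — 3 statements merged into one kernel-verified Lean document; each statement's English description precedes it below -/
import Mathlib

section
/- Let k be a field and f a polynomial automorphism of A^n_k of degree ≥ 2. Then X_f ⊆ I_{f⁻¹}, i.e., the image at infinity of f is contained in the indeterminacy locus of f⁻¹. -/
open MvPolynomial

/-- Composition of polynomial endomorphisms of affine `n`-space. -/
noncomputable def mvComp {k : Type*} [CommSemiring k] {n : ℕ}
    (g f : Fin n → MvPolynomial (Fin n) k) : Fin n → MvPolynomial (Fin n) k :=
  fun i => MvPolynomial.bind₁ f (g i)

/-- The degree of a polynomial endomorphism of affine `n`-space. -/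
noncomputable def mvDeg {k : Type*} [CommSemiring k] {n : ℕ}
    (f : Fin n → MvPolynomial (Fin n) k) : ℕ :=
  Finset.univ.sup fun i => (f i).totalDegree

/-- The highest homogeneous part of a polynomial endomorphism. -/
noncomputable def topPart {k : Type*} [CommSemiring k] {n : ℕ}
    (f : Fin n → MvPolynomial (Fin n) k) : Fin n → MvPolynomial (Fin n) k :=
  fun i => MvPolynomial.homogeneousComponent (mvDeg f) (f i)

namespace StmtAux

variable {k : Type*} [CommRing k] {σ : Type*}

/-- "strict degree bound": every monomial of `p` has degree `< N`.
Equivalent to `p = 0 ∨ p.totalDegree < N`. -/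
def SD (p : MvPolynomial σ k) (N : ℕ) : Prop :=
  ∀ m ∈ p.support, (m.sum fun _ e => e) < N

lemma SD.zero (N : ℕ) : SD (0 : MvPolynomial σ k) N := by
  intro m hm; simp at hm

lemma SD_of_totalDegree_lt {p : MvPolynomial σ k} {N : ℕ}
    (h : p.totalDegree < N) : SD p N :=
  fun m hm => lt_of_le_of_lt (le_totalDegree hm) h

lemma SD.mono {p : MvPolynomial σ k} {N M : ℕ} (h : SD p N) (hNM : N ≤ M) : SD p M :=
  fun m hm => lt_of_lt_of_le (h m hm) hNM

lemma SD.add {p q : MvPolynomial σ k} {N : ℕ} (hp : SD p N) (hq : SD q N) :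
    SD (p + q) N := by
  intro m hm
  rw [mem_support_iff, coeff_add] at hm
  by_cases h : coeff m p = 0
  · exact hq m (mem_support_iff.2 (by simpa [h] using hm))
  · exact hp m (mem_support_iff.2 h)

lemma SD.neg {p : MvPolynomial σ k} {N : ℕ} (hp : SD p N) : SD (-p) N := by
  intro m hm
  rw [mem_support_iff, coeff_neg, neg_ne_zero] at hm
  exact hp m (mem_support_iff.2 hm)

lemma SD.sub {p q : MvPolynomial σ k} {N : ℕ} (hp : SD p N) (hq : SD q N) :
    SD (p - q) N := by
  rw [sub_eq_add_neg]; exact hp.add hq.neg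

lemma SD.mul {p q : MvPolynomial σ k} {N M : ℕ} (hp : SD p N) (hq : q.totalDegree ≤ M) :
    SD (p * q) (N + M) := by
  classical
  intro m hm
  obtain ⟨a, ha, b, hb, rfl⟩ := Finset.mem_add.1 (MvPolynomial.support_mul p q hm)
  have : ((a + b).sum fun _ e => e) = (a.sum fun _ e => e) + (b.sum fun _ e => e) := by
    simp [Finsupp.sum_add_index]
  rw [this]
  exact add_lt_add_of_lt_of_le (hp a ha) (le_trans (le_totalDegree hb) hq)

lemma SD.mul' {p q : MvPolynomial σ k} {N M : ℕ} (hp : p.totalDegree ≤ N) (hq : SD q M) :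
    SD (p * q) (N + M) := by
  rw [mul_comm p q, add_comm N M]; exact hq.mul hp

lemma SD.pow_sub_pow {a b : MvPolynomial σ k} {d : ℕ}
    (ha : a.totalDegree ≤ d) (hb : b.totalDegree ≤ d) (hab : SD (a - b) d) (e : ℕ) :
    SD (a ^ e - b ^ e) (d * e) := by
  induction e with
  | zero => simpa using SD.zero 0
  | succ e ih =>
      have key : a ^ (e+1) - b ^ (e+1) = a * (a ^ e - b ^ e) + (a - b) * b ^ e := by ring
      rw [key]
      have h1 : SD (a * (a ^ e - b ^ e)) (d + d * e) := SD.mul' ha ih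
      have h2 : SD ((a - b) * b ^ e) (d + d * e) := by
        have hbe : (b ^ e).totalDegree ≤ d * e := by
          refine le_trans (totalDegree_pow b e) ?_
          calc e * b.totalDegree ≤ e * d := Nat.mul_le_mul_left e hb
          _ = d * e := Nat.mul_comm e d
        exact hab.mul hbe
      have := h1.add h2
      have harith : d + d * e = d * (e + 1) := by ring
      rwa [harith] at this

lemma SD.prod_sub_prod {ι : Type*} [DecidableEq ι] (s : Finset ι) (m : ι → ℕ)
    (F G : ι → MvPolynomial σ k) {d : ℕ}
    (hF : ∀ i, (F i).totalDegree ≤ d) (hG : ∀ i, (G i).totalDegree ≤ d)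
    (hFG : ∀ i, SD (F i - G i) d) :
    SD ((∏ i ∈ s, F i ^ m i) - ∏ i ∈ s, G i ^ m i) (d * ∑ i ∈ s, m i) := by
  induction s using Finset.induction with
  | empty => simpa using SD.zero 0
  | insert _ _ hnotmem ih =>
      rename_i a s
      rw [Finset.prod_insert hnotmem, Finset.prod_insert hnotmem, Finset.sum_insert hnotmem]
      set P := ∏ i ∈ s, F i ^ m i
      set Q := ∏ i ∈ s, G i ^ m i
      have key : F a ^ m a * P - G a ^ m a * Q
          = F a ^ m a * (P - Q) + (F a ^ m a - G a ^ m a) * Q := by ring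
      rw [key]
      have hFa : (F a ^ m a).totalDegree ≤ d * m a := by
        refine le_trans (totalDegree_pow _ _) ?_
        calc m a * (F a).totalDegree ≤ m a * d := Nat.mul_le_mul_left _ (hF a)
        _ = d * m a := Nat.mul_comm _ _
      have hQ : Q.totalDegree ≤ d * ∑ i ∈ s, m i := by
        refine le_trans (totalDegree_finset_prod s _) ?_
        rw [Finset.mul_sum]
        refine Finset.sum_le_sum fun i _ => ?_
        refine le_trans (totalDegree_pow _ _) ?_
        calc m i * (G i).totalDegree ≤ m i * d := Nat.mul_le_mul_left _ (hG i)
        _ = d * m i := Nat.mul_comm _ _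
      have h1 : SD (F a ^ m a * (P - Q)) (d * m a + d * ∑ i ∈ s, m i) := SD.mul' hFa ih
      have h2 : SD ((F a ^ m a - G a ^ m a) * Q) (d * m a + d * ∑ i ∈ s, m i) :=
        (SD.pow_sub_pow (hF a) (hG a) (hFG a) (m a)).mul hQ
      have := h1.add h2
      have harith : d * m a + d * ∑ i ∈ s, m i = d * (m a + ∑ i ∈ s, m i) := by ring
      rwa [harith] at this

lemma SD.sum {ι : Type*} {s : Finset ι} {h : ι → MvPolynomial σ k} {N : ℕ}
    (H : ∀ i ∈ s, SD (h i) N) :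
    SD (∑ i ∈ s, h i) N :=
  Finset.sum_induction h (fun p => SD p N) (fun _ _ => SD.add) (SD.zero N) H

lemma msum_eq_degree (m : σ →₀ ℕ) : (m.sum fun _ e => e) = m.degree := rfl

lemma SD_sub_homogeneousComponent {p : MvPolynomial σ k} {N : ℕ}
    (hp : p.totalDegree ≤ N) : SD (p - homogeneousComponent N p) N := by
  intro m hm
  rw [mem_support_iff, coeff_sub, coeff_homogeneousComponent] at hm
  by_cases h : m.degree = N
  · simp [h] at hm
  · have hm' : coeff m p ≠ 0 := by simpa [h] using hm
    have := le_totalDegree (mem_support_iff.2 hm')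
    rw [msum_eq_degree] at this ⊢
    omega

lemma bind₁_term_deg {n : ℕ} (g : Fin n → MvPolynomial (Fin n) k) {d : ℕ}
    (hg : ∀ i, (g i).totalDegree ≤ d) (m : Fin n →₀ ℕ) (c : k) :
    (bind₁ g (monomial m c)).totalDegree ≤ d * (m.sum fun _ e => e) := by
  rw [bind₁_monomial]
  refine le_trans (totalDegree_mul _ _) ?_
  rw [totalDegree_C, zero_add]
  refine le_trans (totalDegree_finset_prod _ _) ?_
  have : (m.sum fun _ e => e) = ∑ i ∈ m.support, m i := rfl
  rw [this, Finset.mul_sum]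
  refine Finset.sum_le_sum fun i _ => ?_
  refine le_trans (totalDegree_pow _ _) ?_
  calc m i * (g i).totalDegree ≤ m i * d := Nat.mul_le_mul_left _ (hg i)
  _ = d * m i := Nat.mul_comm _ _

lemma bind₁_totalDegree_le {n : ℕ} (g : Fin n → MvPolynomial (Fin n) k) {d : ℕ}
    (hg : ∀ i, (g i).totalDegree ≤ d) (p : MvPolynomial (Fin n) k) :
    (bind₁ g p).totalDegree ≤ d * p.totalDegree := by
  conv_lhs => rw [← support_sum_monomial_coeff p]
  rw [map_sum]
  refine le_trans (totalDegree_finset_sum _ _) (Finset.sup_le fun m hm => ?_)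
  refine le_trans (bind₁_term_deg g hg m _) ?_
  exact Nat.mul_le_mul_left d (le_totalDegree hm)

lemma SD_bind₁ {n : ℕ} (g : Fin n → MvPolynomial (Fin n) k) {d e : ℕ}
    (hd : 1 ≤ d) (hg : ∀ i, (g i).totalDegree ≤ d) {p : MvPolynomial (Fin n) k}
    (hp : SD p e) : SD (bind₁ g p) (d * e) := by
  conv in bind₁ g p => rw [← support_sum_monomial_coeff p]
  rw [map_sum]
  refine SD.sum fun m hm => ?_
  refine SD_of_totalDegree_lt (lt_of_le_of_lt (bind₁_term_deg g hg m _) ?_)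
  have h1 : d * ((m.sum fun _ e => e) + 1) ≤ d * e := Nat.mul_le_mul_left d (hp m hm)
  rw [Nat.mul_add] at h1
  omega

lemma SD_bind₁_sub_bind₁ {n : ℕ} (f g : Fin n → MvPolynomial (Fin n) k) {d e : ℕ}
    (hf : ∀ i, (f i).totalDegree ≤ d) (hg : ∀ i, (g i).totalDegree ≤ d)
    (hfg : ∀ i, SD (f i - g i) d) {p : MvPolynomial (Fin n) k}
    (hp : p.totalDegree ≤ e) : SD (bind₁ f p - bind₁ g p) (d * e) := by
  classical
  conv in bind₁ f p => rw [← support_sum_monomial_coeff p]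
  conv in bind₁ g p => rw [← support_sum_monomial_coeff p]
  rw [map_sum, map_sum, ← Finset.sum_sub_distrib]
  refine SD.sum fun m hm => ?_
  rw [bind₁_monomial, bind₁_monomial, ← mul_sub]
  have h := SD.mul' (le_of_eq (totalDegree_C (σ := Fin n) (coeff m p)))
    (SD.prod_sub_prod m.support m f g hf hg hfg)
  rw [zero_add] at h
  refine h.mono ?_
  refine Nat.mul_le_mul_left d ?_
  have : (∑ i ∈ m.support, m i) = (m.sum fun _ e => e) := rfl
  rw [this]
  exact le_trans (le_totalDegree hm) hp

end StmtAux

open StmtAux in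
theorem stmt_13 (k : Type*) [Field k] (n : ℕ)
    (f finv : Fin n → MvPolynomial (Fin n) k)
    (hf1 : ∀ i, MvPolynomial.bind₁ f (finv i) = MvPolynomial.X i)
    (hf2 : ∀ i, MvPolynomial.bind₁ finv (f i) = MvPolynomial.X i)
    (hdf : 2 ≤ mvDeg f) :
    -- `X_f ⊆ I_{f⁻¹}` : the image at infinity of `f` lies in the
    -- indeterminacy locus of `f⁻¹`
    ∀ y : Fin n → k, (∃ i, MvPolynomial.eval y (topPart f i) ≠ 0) →
      ∀ j, MvPolynomial.eval (fun i => MvPolynomial.eval y (topPart f i))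
        (topPart finv j) = 0 := by
  intro y hy j
  obtain ⟨i0, -⟩ := hy
  set d := mvDeg f with hd
  set e := mvDeg finv with he
  set G : Fin n → MvPolynomial (Fin n) k := topPart f with hG
  set H : Fin n → MvPolynomial (Fin n) k := topPart finv with hH
  have hfd : ∀ i, (f i).totalDegree ≤ d := fun i =>
    Finset.le_sup (f := fun i => (f i).totalDegree) (Finset.mem_univ i)
  have hvd : ∀ i, (finv i).totalDegree ≤ e := fun i =>
    Finset.le_sup (f := fun i => (finv i).totalDegree) (Finset.mem_univ i)
  have hGhom : ∀ i, (G i).IsHomogeneous d := fun i =>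
    homogeneousComponent_isHomogeneous d (f i)
  have hHhom : ∀ i, (H i).IsHomogeneous e := fun i =>
    homogeneousComponent_isHomogeneous e (finv i)
  have hGd : ∀ i, (G i).totalDegree ≤ d := fun i => (hGhom i).totalDegree_le
  have hHe : ∀ i, (H i).totalDegree ≤ e := fun i => (hHhom i).totalDegree_le
  have hfG : ∀ i, SD (f i - G i) d := fun i => SD_sub_homogeneousComponent (hfd i)
  have hvH : ∀ i, SD (finv i - H i) e := fun i => SD_sub_homogeneousComponent (hvd i)
  -- e ≥ 1
  have he1 : 1 ≤ e := by
    by_contra hcon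
    push_neg at hcon
    interval_cases e
    have h0 : (MvPolynomial.bind₁ finv (f i0)).totalDegree ≤ 0 * (f i0).totalDegree :=
      bind₁_totalDegree_le finv hvd (f i0)
    rw [hf2 i0, Nat.zero_mul, MvPolynomial.totalDegree_X] at h0
    omega
  have hde2 : 2 ≤ d * e := le_trans hdf (Nat.le_mul_of_pos_right d he1)
  -- the key polynomial
  set P : MvPolynomial (Fin n) k := MvPolynomial.bind₁ G (H j) with hP
  have hPhom : P.IsHomogeneous (d * e) := (hHhom j).aeval G hGhom
  -- strict degree bound on P
  have hSD : SD P (d * e) := by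
    have hXj : MvPolynomial.bind₁ f (finv j) = MvPolynomial.X j := hf1 j
    have hkey : P = MvPolynomial.X j
        - (MvPolynomial.bind₁ f (finv j) - MvPolynomial.bind₁ f (H j))
        - (MvPolynomial.bind₁ f (H j) - MvPolynomial.bind₁ G (H j)) := by
      rw [← hXj]; ring
    rw [hkey]
    have s1 : SD (MvPolynomial.X j : MvPolynomial (Fin n) k) (d * e) :=
      SD_of_totalDegree_lt (by rw [MvPolynomial.totalDegree_X]; omega)
    have s2 : SD (MvPolynomial.bind₁ f (finv j) - MvPolynomial.bind₁ f (H j)) (d * e) := by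
      rw [← map_sub]
      exact SD_bind₁ f (by omega) hfd (hvH j)
    have s3 : SD (MvPolynomial.bind₁ f (H j) - MvPolynomial.bind₁ G (H j)) (d * e) :=
      SD_bind₁_sub_bind₁ f G hfd hGd hfG (hHe j)
    exact (s1.sub s2).sub s3
  -- hence P = 0
  have hP0 : P = 0 := by
    by_contra hne
    have h1 : P.totalDegree = d * e := hPhom.totalDegree hne
    have h2 : P.totalDegree < d * e := by
      rw [MvPolynomial.totalDegree]
      have hb : (⊥ : ℕ) < d * e := by
        simpa using (by omega : 0 < d * e)
      exact (Finset.sup_lt_iff hb).2 hSD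
    omega
  -- conclude by evaluating
  have hev : MvPolynomial.eval (fun i => MvPolynomial.eval y (G i)) (H j)
      = MvPolynomial.eval y P := by
    rw [hP]
    exact (MvPolynomial.eval₂Hom_bind₁ (RingHom.id k) y G (H j)).symm
  rw [hev, hP0, map_zero]
end

section
/- Let k be a field of characteristic 0 and f = (x₁ + x₂², x₂ + x₃², x₃) ∈ SAut(A³_k). Then for every n ≥ 0, f^n = (x₁ + n·x₂² + n(n−1)·x₂·x₃² + (Σ_{i=1}^{n−1} i²)·x₃⁴, x₂ + n·x₃², x₃); in particular deg(f^n) ≤ 4 for all n, and deg(f^n) = 4 for n ≥ 2. -/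
open MvPolynomial

/-- The automorphism f = (x₁ + x₂², x₂ + x₃², x₃) of A³. -/
noncomputable def f16 (k : Type*) [Field k] : Fin 3 → MvPolynomial (Fin 3) k :=
  ![MvPolynomial.X 0 + MvPolynomial.X 1 ^ 2,
    MvPolynomial.X 1 + MvPolynomial.X 2 ^ 2,
    MvPolynomial.X 2]

/-- The n-th iterate of f16. -/
noncomputable def iter16 (k : Type*) [Field k] (n : ℕ) :
    Fin 3 → MvPolynomial (Fin 3) k :=
  (fun g i => MvPolynomial.bind₁ g (f16 k i))^[n] (fun i => MvPolynomial.X i)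

lemma natid (n : ℕ) : (n+1) * ((n+1) - 1) = n * (n-1) + n + n := by
  cases n <;> simp <;> ring

lemma natid3 (n : ℕ) : (n+1) * n = n * (n-1) + n + n := by
  cases n with
  | zero => simp
  | succ m => simp [Nat.add_sub_cancel]; ring

lemma natid2 (n : ℕ) : n + n^2 = n * (n-1) + n + n := by
  cases n with
  | zero => simp
  | succ m => simp [Nat.add_sub_cancel]; ring

lemma formula (k : Type*) [Field k] [CharZero k] (n : ℕ) :
    iter16 k n =
      ![MvPolynomial.X 0 + MvPolynomial.C (n : k) * MvPolynomial.X 1 ^ 2 +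
          MvPolynomial.C ((n * (n - 1) : ℕ) : k) * MvPolynomial.X 1 *
            MvPolynomial.X 2 ^ 2 +
          MvPolynomial.C ((∑ i ∈ Finset.range n, i ^ 2 : ℕ) : k) *
            MvPolynomial.X 2 ^ 4,
        MvPolynomial.X 1 + MvPolynomial.C (n : k) * MvPolynomial.X 2 ^ 2,
        MvPolynomial.X 2] := by
  induction n with
  | zero =>
    funext i
    fin_cases i <;> simp [iter16]
  | succ n ih =>
    have h : iter16 k (n+1) = fun i => MvPolynomial.bind₁ (iter16 k n) (f16 k i) := by
      funext i
      simp [iter16, Function.iterate_succ_apply']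
    funext i
    rw [h, ih]
    have hc : ((n + n^2 : ℕ) : MvPolynomial (Fin 3) k)
        = ((n * (n-1) : ℕ) : MvPolynomial (Fin 3) k) + (n : MvPolynomial (Fin 3) k)
          + (n : MvPolynomial (Fin 3) k) := by
      rw [natid2]; push_cast [-Nat.cast_mul]; ring
    have hc' : (((n+1) * n : ℕ) : MvPolynomial (Fin 3) k)
        = ((n * (n-1) : ℕ) : MvPolynomial (Fin 3) k) + (n : MvPolynomial (Fin 3) k)
          + (n : MvPolynomial (Fin 3) k) := by
      rw [natid3]; push_cast [-Nat.cast_mul]; ring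
    fin_cases i
    · simp [f16, Finset.sum_range_succ, natid, Nat.cast_add, Nat.cast_pow,
        C_add, C_mul, C_pow, -Nat.cast_mul]
      linear_combination (-(X 1 * X 2 ^ 2) : MvPolynomial (Fin 3) k) * hc'
    · simp [f16]; ring
    · simp [f16]

lemma deg0_le (k : Type*) [Field k] (a b c : k) :
    (X 0 + C a * X 1 ^ 2 + C b * X 1 * X 2 ^ 2 + C c * X 2 ^ 4 :
      MvPolynomial (Fin 3) k).totalDegree ≤ 4 := by
  refine (totalDegree_add _ _).trans (max_le ((totalDegree_add _ _).trans
    (max_le ((totalDegree_add _ _).trans (max_le ?_ ?_)) ?_)) ?_)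
  · simp [totalDegree_X]
  · exact (totalDegree_mul _ _).trans (by simp [totalDegree_C, totalDegree_X_pow])
  · refine (totalDegree_mul _ _).trans ?_
    have h1 := totalDegree_mul (C b) (X 1 : MvPolynomial (Fin 3) k)
    simp [totalDegree_C, totalDegree_X, totalDegree_X_pow] at h1 ⊢
    omega
  · exact (totalDegree_mul _ _).trans (by simp [totalDegree_C, totalDegree_X_pow])

lemma deg1_le (k : Type*) [Field k] (a : k) :
    (X 1 + C a * X 2 ^ 2 : MvPolynomial (Fin 3) k).totalDegree ≤ 4 := by
  refine (totalDegree_add _ _).trans (max_le ?_ ?_)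
  · simp [totalDegree_X]
  · exact (totalDegree_mul _ _).trans (by simp [totalDegree_C, totalDegree_X_pow])

lemma coeff0 (k : Type*) [Field k] (a b c : k) :
    coeff (Finsupp.single 2 4)
      (X 0 + C a * X 1 ^ 2 + C b * X 1 * X 2 ^ 2 + C c * X 2 ^ 4 :
        MvPolynomial (Fin 3) k) = c := by
  have h2 : coeff (Finsupp.single 2 4) (X 1 * X 2 ^ 2 : MvPolynomial (Fin 3) k)
      = 0 := by
    have : (X 1 * X 2 ^ 2 : MvPolynomial (Fin 3) k)
        = monomial (Finsupp.single 1 1 + Finsupp.single 2 2) 1 := by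
      rw [X_pow_eq_monomial, X, monomial_mul, one_mul]
    rw [this, coeff_monomial, if_neg]
    intro h
    have := DFunLike.congr_fun h 1
    simp at this
  simp [coeff_add, coeff_C_mul, coeff_X_pow, coeff_X', mul_assoc, h2,
    Finsupp.single_eq_single_iff]

theorem stmt_16 (k : Type*) [Field k] [CharZero k] (n : ℕ) :
    iter16 k n =
      ![MvPolynomial.X 0 + MvPolynomial.C (n : k) * MvPolynomial.X 1 ^ 2 +
          MvPolynomial.C ((n * (n - 1) : ℕ) : k) * MvPolynomial.X 1 *
            MvPolynomial.X 2 ^ 2 +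
          MvPolynomial.C ((∑ i ∈ Finset.range n, i ^ 2 : ℕ) : k) *
            MvPolynomial.X 2 ^ 4,
        MvPolynomial.X 1 + MvPolynomial.C (n : k) * MvPolynomial.X 2 ^ 2,
        MvPolynomial.X 2] ∧
    (Finset.univ.sup fun i => (iter16 k n i).totalDegree) ≤ 4 ∧
    (2 ≤ n → (Finset.univ.sup fun i => (iter16 k n i).totalDegree) = 4) := by
  have hf := formula k n
  refine ⟨hf, ?_, ?_⟩
  · rw [hf]
    refine Finset.sup_le fun i _ => ?_
    fin_cases i
    · exact deg0_le k _ _ _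
    · exact deg1_le k _
    · simp [totalDegree_X]
  · intro hn
    refine le_antisymm ?_ ?_
    · rw [hf]
      refine Finset.sup_le fun i _ => ?_
      fin_cases i
      · exact deg0_le k _ _ _
      · exact deg1_le k _
      · simp [totalDegree_X]
    · have hS : ((∑ i ∈ Finset.range n, i ^ 2 : ℕ) : k) ≠ 0 := by
        have h1 : 0 < ∑ i ∈ Finset.range n, i ^ 2 := by
          have : 1 ∈ Finset.range n := Finset.mem_range.mpr (by omega)
          calc 0 < 1 ^ 2 := by norm_num
            _ ≤ ∑ i ∈ Finset.range n, i ^ 2 :=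
              Finset.single_le_sum (f := fun i => i ^ 2) (fun i _ => Nat.zero_le _) this
        exact_mod_cast h1.ne'
      have hc : coeff (Finsupp.single 2 4) (iter16 k n 0)
          = ((∑ i ∈ Finset.range n, i ^ 2 : ℕ) : k) := by
        rw [hf]; exact coeff0 k _ _ _
      have hmem : Finsupp.single (2 : Fin 3) 4 ∈ (iter16 k n 0).support := by
        rw [mem_support_iff, hc]; exact hS
      have h4 : 4 ≤ (iter16 k n 0).totalDegree := by
        have := le_totalDegree hmem
        simpa [Finsupp.sum_single_index] using this
      exact h4.trans (Finset.le_sup (f := fun i => (iter16 k n i).totalDegree) (Finset.mem_univ (0 : Fin 3)))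
end

section
/- Let K be a field and P, Q ∈ K[x₂], a ∈ K*, b ∈ K. The automorphisms f = (x₁ + P(x₂), x₂) and g = (x₁ + Q(x₂), x₂) of A²_K are conjugate by the Jacobian-1 de Jonquières automorphism h = (a·x₁ + R(x₂), a⁻¹·(x₂ − b)) (for any R ∈ K[x₂]) if and only if Q(x₂) = a·P(a·x₂ + b). -/
open MvPolynomial

theorem stmt_19 (K : Type*) [Field K] (P Q R : Polynomial K) (a : K)
    (ha : a ≠ 0) (b : K) :
    -- h ∘ f ∘ h⁻¹ = g, where h = (a x₁ + R(x₂), a⁻¹ (x₂ - b)),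
    -- f = (x₁ + P(x₂), x₂), g = (x₁ + Q(x₂), x₂)
    (∀ i, MvPolynomial.bind₁
        (fun j => MvPolynomial.bind₁
          -- h⁻¹ = (a⁻¹ (x₁ - R(a x₂ + b)), a x₂ + b)
          (![MvPolynomial.C a⁻¹ *
               (MvPolynomial.X 0 -
                 Polynomial.aeval
                   (MvPolynomial.C a * MvPolynomial.X 1 + MvPolynomial.C b) R),
             MvPolynomial.C a * MvPolynomial.X 1 + MvPolynomial.C b] :
              Fin 2 → MvPolynomial (Fin 2) K)
          (![MvPolynomial.X 0 + Polynomial.aeval (MvPolynomial.X 1) P,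
             MvPolynomial.X 1] j))
        (![MvPolynomial.C a * MvPolynomial.X 0 +
             Polynomial.aeval (MvPolynomial.X 1) R,
           MvPolynomial.C a⁻¹ * (MvPolynomial.X 1 - MvPolynomial.C b)] i)
      = (![MvPolynomial.X 0 + Polynomial.aeval (MvPolynomial.X 1) Q,
           MvPolynomial.X 1] : Fin 2 → MvPolynomial (Fin 2) K) i)
    ↔ Q = Polynomial.C a *
        P.comp (Polynomial.C a * Polynomial.X + Polynomial.C b) := by
  have h1 : (MvPolynomial.C a : MvPolynomial (Fin 2) K) * MvPolynomial.C a⁻¹ = 1 := by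
    rw [← MvPolynomial.C_mul, mul_inv_cancel₀ ha, MvPolynomial.C_1]
  have key : ∀ S : Polynomial K,
      MvPolynomial.bind₁
        (fun j => MvPolynomial.bind₁
          (![MvPolynomial.C a⁻¹ *
               (MvPolynomial.X 0 -
                 Polynomial.aeval
                   (MvPolynomial.C a * MvPolynomial.X 1 + MvPolynomial.C b) R),
             MvPolynomial.C a * MvPolynomial.X 1 + MvPolynomial.C b] :
              Fin 2 → MvPolynomial (Fin 2) K)
          (![MvPolynomial.X 0 + Polynomial.aeval (MvPolynomial.X 1) S,
             MvPolynomial.X 1] j))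
        (![MvPolynomial.C a * MvPolynomial.X 0 +
             Polynomial.aeval (MvPolynomial.X 1) R,
           MvPolynomial.C a⁻¹ * (MvPolynomial.X 1 - MvPolynomial.C b)] 0)
    = MvPolynomial.X 0 + MvPolynomial.C a *
        Polynomial.aeval (MvPolynomial.C a * MvPolynomial.X 1 + MvPolynomial.C b) S := by
    intro S
    simp only [map_add, map_mul, map_sub, bind₁_X_right, bind₁_C_right, algHom_C,
      ← Polynomial.aeval_algHom_apply, Matrix.cons_val_zero, Matrix.cons_val_one,
      Matrix.head_cons]
    rw [MvPolynomial.algebraMap_eq]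
    rw [mul_add, ← mul_assoc, h1, one_mul]
    ring
  have aevalQ : ∀ S : Polynomial K,
      Polynomial.aeval (MvPolynomial.X 1 : MvPolynomial (Fin 2) K)
        (Polynomial.C a * S.comp (Polynomial.C a * Polynomial.X + Polynomial.C b))
      = MvPolynomial.C a *
          Polynomial.aeval (MvPolynomial.C a * MvPolynomial.X 1 + MvPolynomial.C b) S := by
    intro S
    rw [map_mul, Polynomial.aeval_comp]
    simp [MvPolynomial.algebraMap_eq]
  constructor
  · intro h
    have h0 := h 0
    rw [key] at h0
    simp only [Matrix.cons_val_zero] at h0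
    have : Polynomial.aeval (MvPolynomial.X 1 : MvPolynomial (Fin 2) K) Q
        = Polynomial.aeval (MvPolynomial.X 1 : MvPolynomial (Fin 2) K)
            (Polynomial.C a * P.comp (Polynomial.C a * Polynomial.X + Polynomial.C b)) := by
      rw [aevalQ]
      exact (add_left_cancel h0).symm
    have inj : Function.Injective
        (⇑(Polynomial.aeval (MvPolynomial.X 1 : MvPolynomial (Fin 2) K) :
            Polynomial K →ₐ[K] MvPolynomial (Fin 2) K)) := by
      intro p q hpq
      have := congrArg (MvPolynomial.aeval (![0, Polynomial.X] : Fin 2 → Polynomial K)) hpq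
      simpa [← Polynomial.aeval_algHom_apply] using this
    exact inj this
  · intro hQ
    intro i
    fin_cases i <;> simp only [Fin.zero_eta, Fin.mk_one, Fin.isValue]
    · rw [key]
      simp only [Matrix.cons_val_zero, hQ, aevalQ]
    · simp only [Matrix.cons_val_one, Matrix.head_cons, map_mul, map_sub,
        bind₁_X_right, bind₁_C_right, algHom_C, Matrix.cons_val_zero, MvPolynomial.algebraMap_eq]
      rw [add_sub_cancel_right, ← mul_assoc, ← MvPolynomial.C_mul,
        inv_mul_cancel₀ ha, MvPolynomial.C_1, one_mul]
end
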